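/- Let P be a simple path in a graph G in which every internal vertex incident to a 'missing' edge has degree greater than d. If the missing edges of P number at least k, then the union of the closed neighborhoods of the endpoints of the missing edges has size at least k·d/2. -/

import Mathlib

/-- Let `p` be a shortest `u`–`v` path in `G` and `D` a set of at least `k` edges of `p`
all of whose endpoints have degree greater than `d` in `G`. Then the union of the closed
neighborhoods of the endpoints of the edges of `D` has at least `k·d/3` vertices. -/
theorem missing_edges_neighborhood_bound {V : Type*} [Fintype V] [DecidableEq V]
    (G : SimpleGraph V) [DecidableRel G.Adj]
    (u v : V) (p : G.Walk u v) (hp : p.IsPath) (hshort : p.length = G.dist u v)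
    (D : Finset (Sym2 V)) (hD : ∀ e ∈ D, e ∈ p.edges)
    (k d : ℕ) (hk : k ≤ D.card)
    (hdeg : ∀ e ∈ D, ∀ x ∈ e, d < G.degree x) :
    k * d ≤ 3 * ({w : V | ∃ e ∈ D, ∃ x ∈ e, x = w ∨ G.Adj x w}.ncard) := by
  classical
  -- triangle inequality with reachability hypotheses
  have tri : ∀ a b c : V, G.Reachable a b → G.Reachable b c →
      G.dist a c ≤ G.dist a b + G.dist b c := by
    intro a b c h1 h2
    obtain ⟨q1, hq1⟩ := h1.exists_walk_length_eq_dist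
    obtain ⟨q2, hq2⟩ := h2.exists_walk_length_eq_dist
    calc G.dist a c ≤ (q1.append q2).length := SimpleGraph.dist_le _
      _ = _ := by rw [SimpleGraph.Walk.length_append, hq1, hq2]
  have hreach : ∀ x, x ∈ p.support → G.Reachable u x := fun x hx => ⟨p.takeUntil x hx⟩
  -- key structural fact for shortest paths
  have keyA : ∀ x (hx : x ∈ p.support),
      G.dist u x ≤ p.length ∧ p.getVert (G.dist u x) = x := by
    intro x hx
    have hsplit := p.take_spec hx
    have hlen : (p.takeUntil x hx).length + (p.dropUntil x hx).length = p.length := by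
      rw [← SimpleGraph.Walk.length_append, hsplit]
    have h1 : G.dist u x ≤ (p.takeUntil x hx).length := SimpleGraph.dist_le _
    have h2 : G.dist x v ≤ (p.dropUntil x hx).length := SimpleGraph.dist_le _
    have h3 : p.length ≤ G.dist u x + G.dist x v := by
      rw [hshort]; exact tri u x v ⟨p.takeUntil x hx⟩ ⟨p.dropUntil x hx⟩
    have hdx : G.dist u x = (p.takeUntil x hx).length := by omega
    refine ⟨by omega, ?_⟩
    have hgv2 : ((p.takeUntil x hx).append (p.dropUntil x hx)).getVert
        (p.takeUntil x hx).length = x := by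
      rw [SimpleGraph.Walk.getVert_append]
      simp
    have hgv : p.getVert (p.takeUntil x hx).length = x :=
      Eq.trans (congrArg (fun q : G.Walk u v =>
        q.getVert (p.takeUntil x hx).length) hsplit.symm) hgv2
    exact Eq.trans (congrArg p.getVert hdx) hgv
  have inj : ∀ x, x ∈ p.support → ∀ y, y ∈ p.support →
      G.dist u x = G.dist u y → x = y := by
    intro x hx y hy h
    rw [← (keyA x hx).2, ← (keyA y hy).2, h]
  -- the target set as a finset
  set SS : Finset V :=
    Finset.univ.filter (fun w => ∃ e ∈ D, ∃ x ∈ e, x = w ∨ G.Adj x w) with hSS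
  have hset : {w : V | ∃ e ∈ D, ∃ x ∈ e, x = w ∨ G.Adj x w} = ↑SS := by
    ext w; simp [hSS]
  rw [hset, Set.ncard_coe_finset]
  -- the set of endpoints of edges of D
  set X : Finset V :=
    Finset.univ.filter (fun x => x ∈ p.support ∧ ∃ e ∈ D, x ∈ e) with hX
  -- the "larger endpoint distance" function on edges
  set g : Sym2 V → ℕ :=
    Sym2.lift ⟨fun a b => max (G.dist u a) (G.dist u b),
      fun a b => by simp [max_comm]⟩ with hg
  have canon : ∀ e ∈ D, 1 ≤ g e ∧ e = s(p.getVert (g e - 1), p.getVert (g e)) ∧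
      p.getVert (g e) ∈ p.support ∧ (p.getVert (g e)) ∈ e ∧
      G.dist u (p.getVert (g e)) = g e := by
    intro e he
    induction e using Sym2.ind with
    | _ a b =>
      have hadj : G.Adj a b := p.edges_subset_edgeSet (hD _ he)
      have ha : a ∈ p.support := p.fst_mem_support_of_mem_edges (hD _ he)
      have hb : b ∈ p.support := p.snd_mem_support_of_mem_edges (hD _ he)
      have hne : G.dist u a ≠ G.dist u b := fun h => hadj.ne (inj a ha b hb h)
      have hab : G.dist a b ≤ 1 := by
        simpa using SimpleGraph.dist_le (SimpleGraph.Walk.cons hadj SimpleGraph.Walk.nil)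
      have hba : G.dist b a ≤ 1 := by rwa [SimpleGraph.dist_comm] at hab
      have w1 : G.dist u a ≤ G.dist u b + 1 :=
        le_trans (tri u b a (hreach b hb) ((hreach b hb).symm.trans (hreach a ha)))
          (by omega)
      have w2 : G.dist u b ≤ G.dist u a + 1 :=
        le_trans (tri u a b (hreach a ha) ((hreach a ha).symm.trans (hreach b hb)))
          (by omega)
      have hgab : g s(a, b) = max (G.dist u a) (G.dist u b) := by simp [hg]
      rcases lt_or_gt_of_ne hne with h | h
      · -- dist u b = dist u a + 1
        have hub : G.dist u b = G.dist u a + 1 := by omega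
        have hge : g s(a, b) = G.dist u b := by rw [hgab]; omega
        refine ⟨by omega, ?_, by rw [hge, (keyA b hb).2]; exact hb,
          by rw [hge, (keyA b hb).2]; exact Sym2.mem_mk_right a b,
          by rw [hge, (keyA b hb).2]⟩
        rw [hge, (keyA b hb).2, hub]
        simp only [Nat.add_sub_cancel]
        rw [(keyA a ha).2]
      · have hua : G.dist u a = G.dist u b + 1 := by omega
        have hge : g s(a, b) = G.dist u a := by rw [hgab]; omega
        refine ⟨by omega, ?_, by rw [hge, (keyA a ha).2]; exact ha,
          by rw [hge, (keyA a ha).2]; exact Sym2.mem_mk_left a b,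
          by rw [hge, (keyA a ha).2]⟩
        rw [hge, (keyA a ha).2, hua]
        simp only [Nat.add_sub_cancel]
        rw [(keyA b hb).2, Sym2.eq_swap]
  -- |D| ≤ |X|
  have hDX : D.card ≤ X.card := by
    apply Finset.card_le_card_of_injOn (fun e => p.getVert (g e))
    · intro e he
      obtain ⟨-, -, hsupp, hmem, -⟩ := canon e he
      simp only [hX, Finset.coe_filter, Finset.mem_filter, Finset.mem_univ, true_and, Set.mem_setOf_eq]
      exact ⟨hsupp, e, he, hmem⟩
    · intro e he e' he' hee
      have hee' : p.getVert (g e) = p.getVert (g e') := hee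
      obtain ⟨-, hc1, -, -, hd1⟩ := canon e he
      obtain ⟨-, hc2, -, -, hd2⟩ := canon e' he'
      have hgg : g e = g e' := by rw [← hd1, ← hd2, hee']
      rw [hc1, hc2, hgg]
  -- each vertex of X sees at least d+1 vertices of SS (closed nbhd minus nothing)
  have hBig : ∀ x ∈ X, d + 1 ≤ (SS.filter (fun w => x = w ∨ G.Adj x w)).card := by
    intro x hx
    simp only [hX, Finset.mem_filter, Finset.mem_univ, true_and] at hx
    obtain ⟨hxs, e, he, hxe⟩ := hx
    have hsub : G.neighborFinset x ⊆ SS.filter (fun w => x = w ∨ G.Adj x w) := by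
      intro w hw
      rw [SimpleGraph.mem_neighborFinset] at hw
      simp only [hSS, Finset.mem_filter, Finset.mem_univ, true_and]
      exact ⟨⟨e, he, x, hxe, Or.inr hw⟩, Or.inr hw⟩
    have := Finset.card_le_card hsub
    have hdeg' : d < G.degree x := hdeg e he x hxe
    rw [← SimpleGraph.card_neighborFinset_eq_degree] at hdeg'
    omega
  -- each vertex is in the closed neighborhood of at most 3 vertices of X
  have hSmall : ∀ w : V, (X.filter (fun x => x = w ∨ G.Adj x w)).card ≤ 3 := by
    intro w
    set T := X.filter (fun x => x = w ∨ G.Adj x w) with hT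
    have hTsupp : ∀ x ∈ T, x ∈ p.support := by
      intro x hx
      simp only [hT, hX, Finset.mem_filter, Finset.mem_univ, true_and] at hx
      exact hx.1.1
    have hTnear : ∀ x ∈ T, ∀ y ∈ T, G.dist u x ≤ G.dist u y + 2 := by
      intro x hx y hy
      have hxw : x = w ∨ G.Adj x w := by
        simp only [hT, Finset.mem_filter] at hx; exact hx.2
      have hyw : y = w ∨ G.Adj y w := by
        simp only [hT, Finset.mem_filter] at hy; exact hy.2
      have hrx : G.Reachable w x := by
        rcases hxw with h | h
        · exact h ▸ SimpleGraph.Reachable.refl _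
        · exact ⟨SimpleGraph.Walk.cons h.symm SimpleGraph.Walk.nil⟩
      have hry : G.Reachable y w := by
        rcases hyw with h | h
        · exact h ▸ SimpleGraph.Reachable.refl _
        · exact ⟨SimpleGraph.Walk.cons h SimpleGraph.Walk.nil⟩
      have h1 : G.dist y w ≤ 1 := by
        rcases hyw with h | h
        · subst h; simp [SimpleGraph.dist_self]
        · simpa using SimpleGraph.dist_le (SimpleGraph.Walk.cons h SimpleGraph.Walk.nil)
      have h2 : G.dist w x ≤ 1 := by
        rcases hxw with h | h
        · subst h; simp [SimpleGraph.dist_self]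
        · simpa using SimpleGraph.dist_le
            (SimpleGraph.Walk.cons h.symm SimpleGraph.Walk.nil)
      have hyx : G.dist y x ≤ 2 :=
        le_trans (tri y w x hry hrx) (by omega)
      have := tri u y x (hreach y (hTsupp y hy)) (hry.trans hrx)
      omega
    rcases T.eq_empty_or_nonempty with h | h
    · simp [h]
    · have hinj : Set.InjOn (G.dist u) ↑T := by
        intro x hx y hy hxy
        exact inj x (hTsupp x hx) y (hTsupp y hy) hxy
      have hcard : T.card = (T.image (G.dist u)).card :=
        (Finset.card_image_of_injOn hinj).symm
      set N := T.image (G.dist u) with hN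
      have hNne : N.Nonempty := h.image _
      set m := N.min' hNne with hm
      have hsub : N ⊆ Finset.Icc m (m + 2) := by
        intro n hn
        obtain ⟨x, hx, rfl⟩ := Finset.mem_image.mp hn
        obtain ⟨y, hy, hym⟩ := Finset.mem_image.mp (N.min'_mem hNne)
        rw [Finset.mem_Icc]
        refine ⟨N.min'_le _ hn, ?_⟩
        have := hTnear x hx y hy
        omega
      calc T.card = N.card := hcard
        _ ≤ (Finset.Icc m (m + 2)).card := Finset.card_le_card hsub
        _ = 3 := by rw [Nat.card_Icc]; omega
  -- double counting
  have hcount : X.card * (d + 1) ≤ SS.card * 3 := by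
    calc X.card * (d + 1) = ∑ _x ∈ X, (d + 1) := by
          rw [Finset.sum_const, smul_eq_mul]
      _ ≤ ∑ x ∈ X, (SS.filter (fun w => x = w ∨ G.Adj x w)).card :=
          Finset.sum_le_sum hBig
      _ = ∑ x ∈ X, ∑ w ∈ SS, (if x = w ∨ G.Adj x w then 1 else 0) :=
          Finset.sum_congr rfl fun x _ => Finset.card_filter _ _
      _ = ∑ w ∈ SS, ∑ x ∈ X, (if x = w ∨ G.Adj x w then 1 else 0) :=
          Finset.sum_comm
      _ = ∑ w ∈ SS, (X.filter (fun x => x = w ∨ G.Adj x w)).card :=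
          Finset.sum_congr rfl fun w _ => (Finset.card_filter _ _).symm
      _ ≤ ∑ _w ∈ SS, 3 := Finset.sum_le_sum (fun w _ => hSmall w)
      _ = SS.card * 3 := by rw [Finset.sum_const, smul_eq_mul]
  have : k * (d + 1) ≤ X.card * (d + 1) :=
    Nat.mul_le_mul_right _ (le_trans hk hDX)
  calc k * d ≤ k * (d + 1) := Nat.mul_le_mul_left _ (by omega)
    _ ≤ SS.card * 3 := le_trans this hcount
    _ = 3 * SS.card := Nat.mul_comm _ _
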